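/- Let T be a rooted tree with root r of degree ρ ≤ k−2 and n ≥ k+1 vertices and maximum degree at most k, where some child u of r has a child v. Then the tree T' = T − uv + rv (rooted at r) has strictly more root-containing subtrees than T, and still has maximum degree at most k. -/

import Mathlib

open SimpleGraph Finset

/-- Eccentricity of a vertex: max distance to any vertex. -/
noncomputable def ecc {V : Type*} [Fintype V] (G : SimpleGraph V) (v : V) : ℕ :=
  Finset.univ.sup (fun u => G.dist v u)

/-- The center: vertices of minimum eccentricity. -/
noncomputable def center {V : Type*} [Fintype V] (G : SimpleGraph V) : Set V :=
  {v | ∀ u, ecc G v ≤ ecc G u}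

/-- Total distance of a vertex. -/
noncomputable def totalDist {V : Type*} [Fintype V] (G : SimpleGraph V) (v : V) : ℕ :=
  ∑ u, G.dist v u

/-- The centroid: vertices of minimum total distance. -/
noncomputable def centroid {V : Type*} [Fintype V] (G : SimpleGraph V) : Set V :=
  {v | ∀ u, totalDist G v ≤ totalDist G u}

/-- Number of subtrees (connected induced subgraphs on nonempty vertex sets) containing `v`. -/
noncomputable def subtreeCount {V : Type*} [Fintype V] (G : SimpleGraph V) (v : V) : ℕ :=
  Nat.card {A : Finset V // v ∈ A ∧ (G.induce (A : Set V)).Connected}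

/-- The subtree core: vertices maximizing the number of containing subtrees. -/
noncomputable def core {V : Type*} [Fintype V] (G : SimpleGraph V) : Set V :=
  {v | ∀ u, subtreeCount G u ≤ subtreeCount G v}

/-- Distance between two sets of vertices. -/
noncomputable def setDist {V : Type*} (G : SimpleGraph V) (S S' : Set V) : ℕ :=
  sInf {n | ∃ u ∈ S, ∃ v ∈ S', G.dist u v = n}

private lemma reach_of_adj_reach {W : Type*} {H H' : SimpleGraph W}
    (h : ∀ a b : W, H.Adj a b → H'.Reachable a b) {a b : W} (hr : H.Reachable a b) :
    H'.Reachable a b := by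
  obtain ⟨w⟩ := hr
  induction w with
  | nil => exact SimpleGraph.Reachable.refl _
  | cons h' p ih => exact (h _ _ h').trans ih

/-- moving a grandchild of the root up to the root strictly increases
the number of root-containing subtrees, keeping maximum degree at most `k`. -/
theorem shift_up_increases_subtreeCount {V : Type*} [Fintype V] (G : SimpleGraph V)
    (hT : G.IsTree) (r u v : V) (k n : ℕ) (hn : n = Fintype.card V) (hnk : k + 1 ≤ n)
    (hρ : (G.neighborSet r).ncard ≤ k - 2)
    (hmax : ∀ w, (G.neighborSet w).ncard ≤ k)
    (hru : G.Adj r u) (huv : G.Adj u v) (hvr : v ≠ r) :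
    subtreeCount G r <
      subtreeCount (G.deleteEdges {s(u,v)} ⊔ SimpleGraph.fromEdgeSet {s(r,v)}) r ∧
    ∀ w, (((G.deleteEdges {s(u,v)} ⊔ SimpleGraph.fromEdgeSet {s(r,v)})).neighborSet w).ncard
      ≤ k := by
  classical
  set G' := G.deleteEdges {s(u,v)} ⊔ SimpleGraph.fromEdgeSet {s(r,v)} with hG'def
  have hur : u ≠ r := hru.ne'
  have hunev : u ≠ v := huv.ne
  have hrv : r ≠ v := Ne.symm hvr
  -- r is not adjacent to v in G (otherwise two distinct paths r→v)
  have hnrv : ¬ G.Adj r v := by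
    intro h
    have hp1 : (SimpleGraph.Walk.cons h SimpleGraph.Walk.nil).IsPath := by
      simp [hrv]
    have hp2 : (SimpleGraph.Walk.cons hru (SimpleGraph.Walk.cons huv
        SimpleGraph.Walk.nil)).IsPath := by
      simp [hur.symm, hrv, hunev]
    have := hT.IsAcyclic.path_unique ⟨_, hp1⟩ ⟨_, hp2⟩
    have hlen := congrArg (fun p : G.Path r v => p.1.length) this
    simp at hlen
  -- adjacency in G'
  have hG'adj : ∀ a b : V, G'.Adj a b ↔
      (G.Adj a b ∧ s(a, b) ≠ s(u, v)) ∨ (a = r ∧ b = v) ∨ (a = v ∧ b = r) := by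
    intro a b
    constructor
    · intro h
      rcases h with h | h
      · rw [SimpleGraph.deleteEdges_adj] at h
        exact Or.inl ⟨h.1, by simpa using h.2⟩
      · rw [SimpleGraph.fromEdgeSet_adj] at h
        rcases Sym2.eq_iff.mp (by simpa using h.1) with ⟨h1, h2⟩ | ⟨h1, h2⟩
        · exact Or.inr (Or.inl ⟨h1, h2⟩)
        · exact Or.inr (Or.inr ⟨h1, h2⟩)
    · intro h
      rcases h with ⟨h1, h2⟩ | ⟨h1, h2⟩ | ⟨h1, h2⟩
      · exact Or.inl (by rw [SimpleGraph.deleteEdges_adj]; exact ⟨h1, by simpa using h2⟩)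
      · subst h1; subst h2
        exact Or.inr (by rw [SimpleGraph.fromEdgeSet_adj]; exact ⟨by simp, hrv⟩)
      · subst h1; subst h2
        exact Or.inr (by rw [SimpleGraph.fromEdgeSet_adj]; exact ⟨by simp [Sym2.eq_swap], hvr⟩)
  have hG'rv : G'.Adj r v := (hG'adj r v).mpr (Or.inr (Or.inl ⟨rfl, rfl⟩))
  have hG'ur : G'.Adj u r := by
    refine (hG'adj u r).mpr (Or.inl ⟨hru.symm, ?_⟩)
    intro h
    rcases Sym2.eq_iff.mp h with ⟨h1, h2⟩ | ⟨h1, h2⟩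
    · exact hvr h2.symm
    · exact hur h2.symm
  -- connectivity transfer
  have key : ∀ A : Finset V, r ∈ A → (G.induce (A : Set V)).Connected →
      (G'.induce (A : Set V)).Connected := by
    intro A hrA hc
    have hrA' : r ∈ (A : Set V) := by simpa using hrA
    rw [SimpleGraph.connected_iff]
    refine ⟨fun a b => ?_, ⟨⟨r, hrA'⟩⟩⟩
    refine reach_of_adj_reach (fun x y hxy => ?_) (hc.preconnected a b)
    have hxy' : G.Adj (x : V) (y : V) := hxy
    by_cases he : s((x : V), (y : V)) = s(u, v)
    · rcases Sym2.eq_iff.mp he with ⟨h1, h2⟩ | ⟨h1, h2⟩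
      · -- x = u, y = v : go u → r → v
        have h1' : (G'.induce (A : Set V)).Adj x ⟨r, hrA'⟩ :=
          SimpleGraph.comap_adj.mpr (show G'.Adj (x : V) r by rw [h1]; exact hG'ur)
        have h2' : (G'.induce (A : Set V)).Adj ⟨r, hrA'⟩ y :=
          SimpleGraph.comap_adj.mpr (show G'.Adj r (y : V) by rw [h2]; exact hG'rv)
        exact h1'.reachable.trans h2'.reachable
      · -- x = v, y = u
        have h1' : (G'.induce (A : Set V)).Adj x ⟨r, hrA'⟩ :=
          SimpleGraph.comap_adj.mpr (show G'.Adj (x : V) r by rw [h1]; exact hG'rv.symm)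
        have h2' : (G'.induce (A : Set V)).Adj ⟨r, hrA'⟩ y :=
          SimpleGraph.comap_adj.mpr (show G'.Adj r (y : V) by rw [h2]; exact hG'ur.symm)
        exact h1'.reachable.trans h2'.reachable
    · have : (G'.induce (A : Set V)).Adj x y :=
        SimpleGraph.comap_adj.mpr ((hG'adj _ _).mpr (Or.inl ⟨hxy', he⟩))
      exact this.reachable
  -- the sets of subtrees
  set S : Set (Finset V) := {A | r ∈ A ∧ (G.induce (A : Set V)).Connected} with hS
  set S' : Set (Finset V) := {A | r ∈ A ∧ (G'.induce (A : Set V)).Connected} with hS'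
  have hsub : S ⊆ S' := fun A hA => ⟨hA.1, key A hA.1 hA.2⟩
  have hmemS' : ({r, v} : Finset V) ∈ S' := by
    refine ⟨by simp, ?_⟩
    have hr' : r ∈ ((({r, v} : Finset V) : Set V)) := by simp
    rw [SimpleGraph.connected_iff]
    refine ⟨fun a b => ?_, ⟨⟨r, hr'⟩⟩⟩
    have hcase : ∀ x : (({r, v} : Finset V) : Set V), (x : V) = r ∨ (x : V) = v := by
      intro x
      have := x.2
      simpa using this
    have hadj : (G'.induce ((({r, v} : Finset V) : Set V))).Adj ⟨r, by simp⟩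
        ⟨v, by simp⟩ := SimpleGraph.comap_adj.mpr hG'rv
    rcases hcase a with ha | ha <;> rcases hcase b with hb | hb
    · exact (Subtype.ext (ha.trans hb.symm) : a = b) ▸ SimpleGraph.Reachable.refl _
    · have : a = ⟨r, by simp⟩ := Subtype.ext ha
      have hb' : b = ⟨v, by simp⟩ := Subtype.ext hb
      rw [this, hb']; exact hadj.reachable
    · have : a = ⟨v, by simp⟩ := Subtype.ext ha
      have hb' : b = ⟨r, by simp⟩ := Subtype.ext hb
      rw [this, hb']; exact hadj.symm.reachable
    · exact (Subtype.ext (ha.trans hb.symm) : a = b) ▸ SimpleGraph.Reachable.refl _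
  have hnmemS : ({r, v} : Finset V) ∉ S := by
    rintro ⟨-, hc⟩
    have hr' : r ∈ ((({r, v} : Finset V) : Set V)) := by simp
    have hv' : v ∈ ((({r, v} : Finset V) : Set V)) := by simp
    have : (⊥ : SimpleGraph ((({r, v} : Finset V) : Set V))).Reachable ⟨r, hr'⟩ ⟨v, hv'⟩ := by
      refine reach_of_adj_reach (fun x y hxy => ?_) (hc.preconnected _ _)
      have hxy' : G.Adj (x : V) (y : V) := hxy
      exfalso
      have hx := x.2
      have hy := y.2
      simp only [Finset.coe_insert, Finset.coe_singleton, Set.mem_insert_iff,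
        Set.mem_singleton_iff] at hx hy
      rcases hx with hx | hx <;> rcases hy with hy | hy
      · exact G.irrefl (by rwa [hx, hy] at hxy')
      · exact hnrv (by rwa [hx, hy] at hxy')
      · rw [hx, hy] at hxy'; exact hnrv hxy'.symm
      · exact G.irrefl (by rwa [hx, hy] at hxy')
    have := (SimpleGraph.reachable_bot.mp this)
    exact hrv (congrArg Subtype.val this)
  have hssub : S ⊂ S' := ⟨hsub, fun h => hnmemS (h hmemS')⟩
  have hcard : S.ncard < S'.ncard := Set.ncard_lt_ncard hssub (Set.toFinite _)
  have hcount1 : subtreeCount G r = S.ncard := by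
    rw [subtreeCount, ← Nat.card_coe_set_eq]
    rfl
  have hcount2 : subtreeCount G' r = S'.ncard := by
    rw [subtreeCount, ← Nat.card_coe_set_eq]
    rfl
  -- k ≥ 2
  have hk2 : 2 ≤ k := by
    have hsub2 : ({r, v} : Set V) ⊆ G.neighborSet u := by
      intro x hx
      rcases hx with hx | hx
      · subst hx; exact hru.symm
      · simp only [Set.mem_singleton_iff] at hx; subst hx; exact huv
    have h2 : ({r, v} : Set V).ncard = 2 := Set.ncard_pair hrv
    have := Set.ncard_le_ncard hsub2 (Set.toFinite _)
    rw [h2] at this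
    exact this.trans (hmax u)
  constructor
  · rw [hcount1, hcount2]; exact hcard
  · intro w
    by_cases hwr : w = r
    · subst hwr
      have hsubn : G'.neighborSet w ⊆ insert v (G.neighborSet w) := by
        intro x hx
        rcases (hG'adj w x).mp hx with ⟨h1, -⟩ | ⟨-, h2⟩ | ⟨h1, -⟩
        · exact Set.mem_insert_of_mem _ h1
        · subst h2; exact Set.mem_insert _ _
        · exact absurd h1 hvr.symm
      calc (G'.neighborSet w).ncard ≤ (insert v (G.neighborSet w)).ncard :=
            Set.ncard_le_ncard hsubn (Set.toFinite _)
        _ ≤ (G.neighborSet w).ncard + 1 := Set.ncard_insert_le _ _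
        _ ≤ (k - 2) + 1 := by omega
        _ ≤ k := by omega
    · by_cases hwv : w = v
      · subst hwv
        have hsubn : G'.neighborSet w ⊆ insert r (G.neighborSet w \ {u}) := by
          intro x hx
          rcases (hG'adj w x).mp hx with ⟨h1, h2⟩ | ⟨h1, -⟩ | ⟨-, h2⟩
          · refine Set.mem_insert_of_mem _ ⟨h1, ?_⟩
            simp only [Set.mem_singleton_iff]
            rintro rfl
            exact h2 (Sym2.eq_swap)
          · exact absurd h1 hvr
          · subst h2; exact Set.mem_insert _ _
        have humem : u ∈ G.neighborSet w := huv.symm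
        have hpos : 1 ≤ (G.neighborSet w).ncard := by
          have : (G.neighborSet w).Nonempty := ⟨u, humem⟩
          have := Set.ncard_pos (Set.toFinite _) |>.mpr this
          omega
        have hdiff : (G.neighborSet w \ {u}).ncard = (G.neighborSet w).ncard - 1 :=
          Set.ncard_diff_singleton_of_mem humem
        calc (G'.neighborSet w).ncard ≤ (insert r (G.neighborSet w \ {u})).ncard :=
              Set.ncard_le_ncard hsubn (Set.toFinite _)
          _ ≤ (G.neighborSet w \ {u}).ncard + 1 := Set.ncard_insert_le _ _
          _ ≤ k := by have := hmax w; omega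
      · have hsubn : G'.neighborSet w ⊆ G.neighborSet w := by
          intro x hx
          rcases (hG'adj w x).mp hx with ⟨h1, -⟩ | ⟨h1, -⟩ | ⟨h1, -⟩
          · exact h1
          · exact absurd h1 hwr
          · exact absurd h1 hwv
        exact (Set.ncard_le_ncard hsubn (Set.toFinite _)).trans (hmax w)
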